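/- Under assumptions (H) on the perturbed dynamical system, suppose B := B(0,1) ∩ E (the intersection of the open unit ball with E) has positive Lebesgue measure. Then θ₂' := inf_{x∈B} P_1 1_B(x) is strictly positive, and for every n ≥ 1 and every x ∈ B one has P_n 1_B(x) ≥ (θ₂')^n. -/

import Mathlib

open MeasureTheory Set

noncomputable section

variable {d : ℕ}

/-- The law of a (possibly non-centered) nondegenerate Gaussian random vector on `ℝ^d`:
it has a density with mean `m` and positive-definite covariance matrix `Cov` with
respect to the Lebesgue measure. -/
def IsNondegGaussian (γ : Measure (EuclideanSpace ℝ (Fin d))) : Prop :=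
  ∃ (m : EuclideanSpace ℝ (Fin d)) (Cov : Matrix (Fin d) (Fin d) ℝ), Cov.PosDef ∧
    γ = volume.withDensity (fun z => ENNReal.ofReal
      ((Real.sqrt ((2 * Real.pi) ^ d * Cov.det))⁻¹ *
        Real.exp (-(∑ i, ∑ j, (z i - m i) * Cov⁻¹ i j * (z j - m j)) / 2)))

/-- One step of the Feynman–Kac semigroup associated with the perturbed dynamical
system `X_{n+1} = F(X_n) + ξ_n` (noise law `γ`), penalization `G` and domain `Edom`:
`P_1 f(x) = ∫ G(F(x)+z) 1_{Edom}(F(x)+z) f(F(x)+z) γ(dz)`. -/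
def FKstep (Edom : Set (EuclideanSpace ℝ (Fin d)))
    (F : EuclideanSpace ℝ (Fin d) → EuclideanSpace ℝ (Fin d))
    (G : EuclideanSpace ℝ (Fin d) → ℝ) (γ : Measure (EuclideanSpace ℝ (Fin d)))
    (f : EuclideanSpace ℝ (Fin d) → ℝ) (x : EuclideanSpace ℝ (Fin d)) : ℝ :=
  ∫ z, Edom.indicator (fun y => G y * f y) (F x + z) ∂γ

/-- The Feynman–Kac semigroup: `P_0 = Id`, `P_n = (P_1)^n`. -/
def FK (Edom : Set (EuclideanSpace ℝ (Fin d)))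
    (F : EuclideanSpace ℝ (Fin d) → EuclideanSpace ℝ (Fin d))
    (G : EuclideanSpace ℝ (Fin d) → ℝ) (γ : Measure (EuclideanSpace ℝ (Fin d))) :
    ℕ → (EuclideanSpace ℝ (Fin d) → ℝ) → EuclideanSpace ℝ (Fin d) → ℝ :=
  fun n => (FKstep Edom F G γ)^[n]

open scoped NNReal ENNReal

namespace FKmassAux


lemma coord_continuous (i : Fin d) :
    Continuous fun v : EuclideanSpace ℝ (Fin d) => v i := by fun_prop

lemma quad_homog (M : Matrix (Fin d) (Fin d) ℝ) (c : ℝ) (v : EuclideanSpace ℝ (Fin d)) :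
    ∑ i, ∑ j, (c • v) i * M i j * (c • v) j
      = c ^ 2 * ∑ i, ∑ j, v i * M i j * v j := by
  simp only [Finset.mul_sum]
  refine Finset.sum_congr rfl fun i _ => Finset.sum_congr rfl fun j _ => ?_
  have h1 : (c • v) i = c * v i := rfl
  have h2 : (c • v) j = c * v j := rfl
  rw [h1, h2]; ring

lemma quad_continuous (M : Matrix (Fin d) (Fin d) ℝ) :
    Continuous fun v : EuclideanSpace ℝ (Fin d) => ∑ i, ∑ j, v i * M i j * v j := by
  refine continuous_finset_sum _ fun i _ => continuous_finset_sum _ fun j _ => ?_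
  exact ((coord_continuous i).mul continuous_const).mul (coord_continuous j)

lemma quad_lower_bound (M : Matrix (Fin d) (Fin d) ℝ) (hM : M.PosDef) :
    ∃ lam : ℝ, 0 < lam ∧ ∀ v : EuclideanSpace ℝ (Fin d),
      lam * ‖v‖ ^ 2 ≤ ∑ i, ∑ j, v i * M i j * v j := by
  have hpos : ∀ v : EuclideanSpace ℝ (Fin d), v ≠ 0 →
      0 < ∑ i, ∑ j, v i * M i j * v j := by
    intro v hv
    have hv' : (fun i => v i) ≠ (0 : Fin d → ℝ) := by
      intro h0
      exact hv (by ext i; simpa using congrFun h0 i)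
    have h := hM.dotProduct_mulVec_pos hv'
    have heq : dotProduct (star fun i => v i) (M.mulVec fun i => v i)
        = ∑ i, ∑ j, v i * M i j * v j := by
      simp only [star_trivial, dotProduct, Matrix.mulVec, Finset.mul_sum]
      exact Finset.sum_congr rfl fun i _ => Finset.sum_congr rfl fun j _ => by ring
    rw [heq] at h
    exact h
  rcases Nat.eq_zero_or_pos d with hd | hd
  · subst hd
    refine ⟨1, one_pos, fun v => ?_⟩
    have hv : v = 0 := Subsingleton.elim v 0
    subst hv
    simp
  · have hsne : (Metric.sphere (0 : EuclideanSpace ℝ (Fin d)) 1).Nonempty := by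
      refine ⟨EuclideanSpace.single ⟨0, hd⟩ (1 : ℝ), ?_⟩
      simp [mem_sphere_zero_iff_norm, EuclideanSpace.norm_single]
    obtain ⟨v₀, hv₀S, hmin⟩ :=
      (isCompact_sphere (0 : EuclideanSpace ℝ (Fin d)) 1).exists_isMinOn hsne
        (quad_continuous M).continuousOn
    have hv₀norm : ‖v₀‖ = 1 := mem_sphere_zero_iff_norm.mp hv₀S
    have hv₀ne : v₀ ≠ 0 := by
      intro h; rw [h, norm_zero] at hv₀norm; norm_num at hv₀norm
    refine ⟨_, hpos v₀ hv₀ne, fun v => ?_⟩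
    rcases eq_or_ne v 0 with rfl | hv
    · have hz : ∀ i : Fin d, (0 : EuclideanSpace ℝ (Fin d)) i = 0 := fun i => rfl
      simp [hz]
    · set u := ‖v‖⁻¹ • v with hu
      have hvne : ‖v‖ ≠ 0 := norm_ne_zero_iff.mpr hv
      have hun : ‖u‖ = 1 := by
        rw [hu, norm_smul, norm_inv, norm_norm, inv_mul_cancel₀ hvne]
      have huS : u ∈ Metric.sphere (0 : EuclideanSpace ℝ (Fin d)) 1 :=
        mem_sphere_zero_iff_norm.mpr hun
      have hlam_le : ∑ i, ∑ j, v₀ i * M i j * v₀ j ≤ ∑ i, ∑ j, u i * M i j * u j := hmin huS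
      have key : ∑ i, ∑ j, v i * M i j * v j
          = ‖v‖ ^ 2 * ∑ i, ∑ j, u i * M i j * u j := by
        have hveq : v = ‖v‖ • u := by
          rw [hu, smul_smul, mul_inv_cancel₀ hvne, one_smul]
        conv_lhs => rw [hveq]
        exact quad_homog M ‖v‖ u
      rw [key]
      nlinarith [sq_nonneg ‖v‖]

lemma gaussian_integrable {b : ℝ} (hb : 0 < b) :
    Integrable fun v : EuclideanSpace ℝ (Fin d) => Real.exp (-b * ‖v‖ ^ 2) := by
  have h := (GaussianFourier.integrable_cexp_neg_mul_sq_norm_add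
    (b := (b : ℂ)) (by simpa using hb) 0 (0 : EuclideanSpace ℝ (Fin d))).norm
  refine h.congr (ae_of_all _ fun v => ?_)
  simp [Complex.norm_exp, ← Complex.ofReal_pow]

lemma gaussian_pkg (γ : Measure (EuclideanSpace ℝ (Fin d))) (hγ : IsNondegGaussian γ) :
    ∃ ρ : EuclideanSpace ℝ (Fin d) → ℝ, Continuous ρ ∧ (∀ z, 0 < ρ z) ∧
      (∀ f : EuclideanSpace ℝ (Fin d) → ℝ, ∫ z, f z ∂γ = ∫ z, ρ z * f z) ∧
      ∀ k : ℝ, Integrable fun z : EuclideanSpace ℝ (Fin d) => ρ z * Real.exp (k * ‖z‖) := by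
  obtain ⟨m, Cov, hPD, hγeq⟩ := hγ
  have hMpd : (Cov⁻¹).PosDef := hPD.inv
  set c := Real.sqrt ((2 * Real.pi) ^ d * Cov.det) with hc
  have hcpos : 0 < c :=
    Real.sqrt_pos.mpr (mul_pos (pow_pos (by positivity) d) hPD.det_pos)
  set q : EuclideanSpace ℝ (Fin d) → ℝ :=
    fun z => ∑ i, ∑ j, (z i - m i) * Cov⁻¹ i j * (z j - m j) with hq
  set ρ : EuclideanSpace ℝ (Fin d) → ℝ := fun z => c⁻¹ * Real.exp (-(q z) / 2) with hρ
  have hqc : Continuous q := by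
    refine continuous_finset_sum _ fun i _ => continuous_finset_sum _ fun j _ => ?_
    exact (((coord_continuous i).sub continuous_const).mul continuous_const).mul
      ((coord_continuous j).sub continuous_const)
  have hρc : Continuous ρ :=
    continuous_const.mul (Real.continuous_exp.comp ((hqc.neg).div_const 2))
  have hρpos : ∀ z, 0 < ρ z := fun z => mul_pos (inv_pos.mpr hcpos) (Real.exp_pos _)
  have hγeq' : γ = volume.withDensity fun z => (((ρ z).toNNReal : ℝ≥0) : ℝ≥0∞) := by
    rw [hγeq]; rfl
  have hconv : ∀ f : EuclideanSpace ℝ (Fin d) → ℝ, ∫ z, f z ∂γ = ∫ z, ρ z * f z := by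
    intro f
    rw [hγeq', integral_withDensity_eq_integral_smul
      (hρc.measurable.real_toNNReal) f]
    refine integral_congr_ae (ae_of_all _ fun z => ?_)
    simp [NNReal.smul_def, Real.coe_toNNReal _ (hρpos z).le]
  obtain ⟨lam, hlam, hquad⟩ := quad_lower_bound Cov⁻¹ hMpd
  have hqlb : ∀ z, lam * ‖z - m‖ ^ 2 ≤ q z := by
    intro z
    have h := hquad (z - m)
    have heq : ∑ i, ∑ j, (z - m) i * Cov⁻¹ i j * (z - m) j = q z := rfl
    rw [heq] at h
    exact h
  refine ⟨ρ, hρc, hρpos, hconv, fun k => ?_⟩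
  set A := c⁻¹ * Real.exp (lam * ‖m‖ ^ 2 / 2 + 2 * k ^ 2 / lam) with hA
  have hbound : ∀ z, ρ z * Real.exp (k * ‖z‖) ≤ A * Real.exp (-(lam / 8) * ‖z‖ ^ 2) := by
    intro z
    have h1 : ‖z‖ ≤ ‖z - m‖ + ‖m‖ := by
      calc ‖z‖ = ‖z - m + m‖ := by rw [sub_add_cancel]
        _ ≤ ‖z - m‖ + ‖m‖ := norm_add_le _ _
    have h2 : lam * (‖z‖ ^ 2 / 2 - ‖m‖ ^ 2) ≤ lam * ‖z - m‖ ^ 2 := by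
      have h2' : ‖z‖ ^ 2 / 2 - ‖m‖ ^ 2 ≤ ‖z - m‖ ^ 2 := by
        nlinarith [norm_nonneg z, norm_nonneg (z - m), norm_nonneg m,
          sq_nonneg (‖z - m‖ - ‖m‖)]
      exact mul_le_mul_of_nonneg_left h2' hlam.le
    have h3 : k * ‖z‖ ≤ lam / 8 * ‖z‖ ^ 2 + 2 * k ^ 2 / lam := by
      rw [← sub_nonneg]
      have key : lam / 8 * ‖z‖ ^ 2 + 2 * k ^ 2 / lam - k * ‖z‖
          = (lam * ‖z‖ - 4 * k) ^ 2 / (8 * lam) := by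
        field_simp; ring
      rw [key]; positivity
    have h4 : lam * (‖z‖ ^ 2 / 2 - ‖m‖ ^ 2) ≤ q z := le_trans h2 (hqlb z)
    have h5 : -(q z) / 2 + k * ‖z‖
        ≤ lam * ‖m‖ ^ 2 / 2 + 2 * k ^ 2 / lam + -(lam / 8) * ‖z‖ ^ 2 := by nlinarith
    calc ρ z * Real.exp (k * ‖z‖) = c⁻¹ * Real.exp (-(q z) / 2 + k * ‖z‖) := by
          rw [hρ, Real.exp_add]; ring
      _ ≤ A * Real.exp (-(lam / 8) * ‖z‖ ^ 2) := by
          rw [hA, mul_assoc, ← Real.exp_add]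
          exact mul_le_mul_of_nonneg_left (Real.exp_le_exp.mpr h5) (inv_nonneg.mpr hcpos.le)
  have hAnn : 0 ≤ A := by positivity
  refine Integrable.mono ((gaussian_integrable (by positivity : (0:ℝ) < lam / 8)).const_mul A)
    ((hρc.mul (Real.continuous_exp.comp (continuous_const.mul continuous_norm))).aestronglyMeasurable)
    (ae_of_all _ fun z => ?_)
  rw [Real.norm_eq_abs, Real.norm_eq_abs,
    abs_of_nonneg (mul_nonneg (hρpos z).le (Real.exp_pos _).le),
    abs_of_nonneg (mul_nonneg hAnn (Real.exp_pos _).le)]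
  exact hbound z


end FKmassAux

set_option maxHeartbeats 2000000 in
/-- Mass creation on the unit ball: under assumptions (H), if `B := B(0,1) ∩ E` has
positive Lebesgue measure, then `θ₂' := inf_{x ∈ B} P_1 1_B(x)` is positive and
`P_n 1_B ≥ (θ₂')^n` on `B` for all `n ≥ 1`. -/
theorem FK_mass_on_unit_ball
    (Edom : Set (EuclideanSpace ℝ (Fin d)))
    (hEm : MeasurableSet Edom) (hEpos : 0 < volume Edom)
    (F : EuclideanSpace ℝ (Fin d) → EuclideanSpace ℝ (Fin d))
    (hFm : Measurable F)
    (hFloc : ∀ R : ℝ, ∃ M : ℝ, ∀ x, ‖x‖ ≤ R → ‖F x‖ ≤ M)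
    (G : EuclideanSpace ℝ (Fin d) → ℝ)
    (hGm : Measurable G) (hGpos : ∀ x ∈ Edom, 0 < G x)
    (hGinvloc : ∀ R : ℝ, ∃ M : ℝ, ∀ x ∈ Edom, ‖x‖ ≤ R → 1 / G x ≤ M)
    (C : ℝ) (hC : 0 < C) (hGgrowth : ∀ x ∈ Edom, G x ≤ C * Real.exp ‖x‖)
    (p : ℝ) (hp : 1 < p)
    (hdrift : ∀ M : ℝ, ∃ R : ℝ, ∀ x, R ≤ ‖x‖ → M ≤ ‖x‖ - p * ‖F x‖)
    (γ : Measure (EuclideanSpace ℝ (Fin d))) (hγ : IsNondegGaussian γ)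
    (hB : 0 < volume (Metric.ball (0 : EuclideanSpace ℝ (Fin d)) 1 ∩ Edom)) :
    0 < sInf ((fun x => FK Edom F G γ 1
        ((Metric.ball (0 : EuclideanSpace ℝ (Fin d)) 1 ∩ Edom).indicator
          fun _ => (1:ℝ)) x) '' (Metric.ball (0 : EuclideanSpace ℝ (Fin d)) 1 ∩ Edom)) ∧
      ∀ n : ℕ, 1 ≤ n → ∀ x ∈ Metric.ball (0 : EuclideanSpace ℝ (Fin d)) 1 ∩ Edom,
        (sInf ((fun x => FK Edom F G γ 1
            ((Metric.ball (0 : EuclideanSpace ℝ (Fin d)) 1 ∩ Edom).indicator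
              fun _ => (1:ℝ)) x) '' (Metric.ball (0 : EuclideanSpace ℝ (Fin d)) 1 ∩ Edom))) ^ n ≤
          FK Edom F G γ n
            ((Metric.ball (0 : EuclideanSpace ℝ (Fin d)) 1 ∩ Edom).indicator
              fun _ => (1:ℝ)) x := by
  classical
  set B : Set (EuclideanSpace ℝ (Fin d)) := Metric.ball 0 1 ∩ Edom with hBdef
  set oneB : EuclideanSpace ℝ (Fin d) → ℝ := B.indicator fun _ => (1:ℝ) with honeB
  obtain ⟨ρ, hρc, hρpos, hconv, hρint⟩ := FKmassAux.gaussian_pkg γ hγ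
  have hρint0 : Integrable ρ := by simpa using hρint 0
  have hBm : MeasurableSet B := measurableSet_ball.inter hEm
  have hBsub : B ⊆ Edom := inter_subset_right
  have hBvol_lt : volume B < ⊤ :=
    lt_of_le_of_lt (measure_mono inter_subset_left) measure_ball_lt_top
  set β := (volume B).toReal with hβ
  have hβpos : 0 < β := ENNReal.toReal_pos hB.ne' hBvol_lt.ne
  obtain ⟨x₀, hx₀⟩ := nonempty_of_measure_ne_zero hB.ne'
  -- lower bound for G on B
  obtain ⟨M', hM'⟩ := hGinvloc 1
  have hM'pos : 0 < M' :=
    lt_of_lt_of_le (one_div_pos.mpr (hGpos x₀ hx₀.2))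
      (hM' x₀ hx₀.2 (mem_ball_zero_iff.mp hx₀.1).le)
  set g₀ : ℝ := 1 / M' with hg₀
  have hg₀pos : 0 < g₀ := by positivity
  have hGlb : ∀ y ∈ B, g₀ ≤ G y := by
    intro y hy
    have hGy := hGpos y hy.2
    have h1 : 1 / G y ≤ M' := hM' y hy.2 (mem_ball_zero_iff.mp hy.1).le
    have h2 : 1 ≤ M' * G y := (div_le_iff₀ hGy).mp h1
    rw [hg₀, div_le_iff₀ hM'pos]
    linarith
  -- bound on noise needed to come back to B
  obtain ⟨M₁, hM₁⟩ := hFloc 1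
  set r : ℝ := 1 + max M₁ 0 with hr
  have hrpos : 0 < r := by positivity
  have hFxz : ∀ x ∈ B, ∀ z : EuclideanSpace ℝ (Fin d), F x + z ∈ B → ‖z‖ ≤ r := by
    intro x hx z hz
    have h1 : ‖F x‖ ≤ max M₁ 0 :=
      le_trans (hM₁ x (mem_ball_zero_iff.mp hx.1).le) (le_max_left _ _)
    have h2 : ‖F x + z‖ ≤ 1 := (mem_ball_zero_iff.mp hz.1).le
    calc ‖z‖ = ‖(F x + z) - F x‖ := by rw [add_sub_cancel_left]
      _ ≤ ‖F x + z‖ + ‖F x‖ := norm_sub_le _ _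
      _ ≤ 1 + max M₁ 0 := add_le_add h2 h1
  -- min of the density on the relevant compact set
  obtain ⟨z₀, hz₀mem, hz₀min⟩ :=
    (isCompact_closedBall (0 : EuclideanSpace ℝ (Fin d)) r).exists_isMinOn
      ⟨0, Metric.mem_closedBall_self hrpos.le⟩ hρc.continuousOn
  set ε := ρ z₀ with hε
  have hεpos : 0 < ε := hρpos z₀
  have hεle : ∀ z : EuclideanSpace ℝ (Fin d), ‖z‖ ≤ r → ε ≤ ρ z := fun z hz =>
    hz₀min (mem_closedBall_zero_iff.mpr hz)
  -- rewrite FKstep using the density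
  have hstep : ∀ (f : EuclideanSpace ℝ (Fin d) → ℝ) (x : EuclideanSpace ℝ (Fin d)),
      FKstep Edom F G γ f x
        = ∫ z, ρ z * Edom.indicator (fun y => G y * f y) (F x + z) :=
    fun f x => hconv _
  -- indicator identity
  have hind : ∀ y, Edom.indicator (fun y' => G y' * oneB y') y = B.indicator G y := by
    intro y
    by_cases hyB : y ∈ B
    · rw [indicator_of_mem (hBsub hyB), indicator_of_mem hyB, honeB,
        indicator_of_mem hyB, mul_one]
    · rw [indicator_of_notMem hyB]
      by_cases hyE : y ∈ Edom
      · rw [indicator_of_mem hyE, honeB, indicator_of_notMem hyB, mul_zero]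
      · rw [indicator_of_notMem hyE]
  have hindnn : ∀ (f : EuclideanSpace ℝ (Fin d) → ℝ), (∀ y, 0 ≤ f y) →
      ∀ y, 0 ≤ Edom.indicator (fun y' => G y' * f y') y :=
    fun f hf => indicator_nonneg fun y hy => mul_nonneg (hGpos y hy).le (hf y)
  have honeBnn : ∀ y, 0 ≤ oneB y := indicator_nonneg fun _ _ => zero_le_one
  have honeBle : ∀ y, oneB y ≤ 1 := by
    intro y
    rw [honeB]
    by_cases hy : y ∈ B
    · rw [indicator_of_mem hy]
    · rw [indicator_of_notMem hy]; norm_num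
  have hFKnn : ∀ (f : EuclideanSpace ℝ (Fin d) → ℝ), (∀ y, 0 ≤ f y) →
      ∀ x, 0 ≤ FKstep Edom F G γ f x := by
    intro f hf x
    rw [hstep]
    exact integral_nonneg fun z => mul_nonneg (hρpos z).le (hindnn f hf _)
  -- one-step mass lower bound
  set θ₀ : ℝ := β * (g₀ * ε) with hθ₀
  have hθ₀pos : 0 < θ₀ := by positivity
  have key1 : ∀ x ∈ B, θ₀ ≤ FKstep Edom F G γ oneB x := by
    intro x hx
    rw [hstep]
    have hpt : ∀ z, B.indicator (fun _ => g₀ * ε) (F x + z)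
        ≤ ρ z * Edom.indicator (fun y => G y * oneB y) (F x + z) := by
      intro z
      rw [hind]
      by_cases hw : F x + z ∈ B
      · rw [indicator_of_mem hw, indicator_of_mem hw]
        have h1 : ε ≤ ρ z := hεle z (hFxz x hx z hw)
        have h2 : g₀ ≤ G (F x + z) := hGlb _ hw
        nlinarith
      · rw [indicator_of_notMem hw, indicator_of_notMem hw, mul_zero]
    have hmeasRHS : AEStronglyMeasurable
        (fun z => ρ z * Edom.indicator (fun y => G y * oneB y) (F x + z)) volume := by
      refine (hρc.measurable.mul ?_).aestronglyMeasurable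
      have hm1 : Measurable (Edom.indicator fun y => G y * oneB y) :=
        (hGm.mul (measurable_const.indicator hBm)).indicator hEm
      exact hm1.comp (measurable_id.const_add (F x))
    have hintRHS : Integrable
        (fun z => ρ z * Edom.indicator (fun y => G y * oneB y) (F x + z)) := by
      refine Integrable.mono (hρint0.const_mul (C * Real.exp 1)) hmeasRHS
        (ae_of_all _ fun z => ?_)
      have hub : Edom.indicator (fun y => G y * oneB y) (F x + z) ≤ C * Real.exp 1 := by
        rw [hind]
        by_cases hw : F x + z ∈ B
        · rw [indicator_of_mem hw]
          calc G (F x + z) ≤ C * Real.exp ‖F x + z‖ := hGgrowth _ (hBsub hw)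
            _ ≤ C * Real.exp 1 := mul_le_mul_of_nonneg_left
                (Real.exp_le_exp.mpr (mem_ball_zero_iff.mp hw.1).le) hC.le
        · rw [indicator_of_notMem hw]; positivity
      have hlbnn : 0 ≤ Edom.indicator (fun y => G y * oneB y) (F x + z) :=
        hindnn oneB honeBnn _
      rw [Real.norm_eq_abs, Real.norm_eq_abs,
        abs_of_nonneg (mul_nonneg (hρpos z).le hlbnn),
        abs_of_nonneg (mul_nonneg (by positivity) (hρpos z).le)]
      nlinarith [(hρpos z).le]
    have hlow_int : ∫ z, B.indicator (fun _ => g₀ * ε) (F x + z) = θ₀ := by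
      rw [integral_add_left_eq_self (fun w => B.indicator (fun _ => g₀ * ε) w) (F x)]
      rw [integral_indicator_const _ hBm]
      rw [hθ₀, hβ]
      simp [smul_eq_mul, measureReal_def]
    calc θ₀ = ∫ z, B.indicator (fun _ => g₀ * ε) (F x + z) := hlow_int.symm
      _ ≤ _ := integral_mono_of_nonneg
          (ae_of_all _ fun z => indicator_nonneg (fun _ _ => by positivity) _)
          hintRHS (ae_of_all _ hpt)
  -- the infimum
  have hFK1 : ∀ f : EuclideanSpace ℝ (Fin d) → ℝ,
      FK Edom F G γ 1 f = FKstep Edom F G γ f := fun f => by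
    simp [FK]
  set S := (fun x => FK Edom F G γ 1 oneB x) '' B with hS
  have hSeq : S = (fun x => FKstep Edom F G γ oneB x) '' B := by
    rw [hS, hFK1]
  have hSne : S.Nonempty := ⟨_, mem_image_of_mem _ hx₀⟩
  have hSbdd : BddBelow S := by
    refine ⟨0, ?_⟩
    rintro v ⟨x, hx, rfl⟩
    rw [hFK1]
    exact hFKnn oneB honeBnn x
  set θ := sInf S with hθdef
  have hθ₀θ : θ₀ ≤ θ := by
    refine le_csInf hSne ?_
    rintro v ⟨x, hx, rfl⟩
    rw [hFK1]
    exact key1 x hx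
  have hθpos : 0 < θ := lt_of_lt_of_le hθ₀pos hθ₀θ
  have hθle : ∀ x ∈ B, θ ≤ FKstep Edom F G γ oneB x := by
    intro x hx
    refine csInf_le hSbdd ?_
    rw [hSeq]
    exact mem_image_of_mem _ hx
  -- linear growth of F
  obtain ⟨R, hR⟩ := hdrift 0
  obtain ⟨MR, hMR⟩ := hFloc (max R 0)
  set c₀ : ℝ := max MR 0 with hc₀
  have hc₀nn : 0 ≤ c₀ := le_max_right _ _
  have hFgrow : ∀ x, ‖F x‖ ≤ ‖x‖ + c₀ := by
    intro x
    rcases le_or_gt ‖x‖ (max R 0) with h | h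
    · have := le_trans (hMR x h) (le_max_left MR 0)
      have hxnn := norm_nonneg x
      rw [hc₀]; linarith
    · have h2 := hR x (le_trans (le_max_left R 0) h.le)
      have hp0 : 0 < p := lt_trans one_pos hp
      have h3 : p * ‖F x‖ ≤ ‖x‖ := by linarith
      have h4 : ‖F x‖ ≤ ‖x‖ := by nlinarith [norm_nonneg (F x)]
      linarith
  set FKn : ℕ → EuclideanSpace ℝ (Fin d) → ℝ := fun n => FK Edom F G γ n oneB with hFKn
  have hFK0 : FKn 0 = oneB := rfl
  have hFKsucc : ∀ n, FKn (n+1) = FKstep Edom F G γ (FKn n) := by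
    intro n
    rw [hFKn]
    show FK Edom F G γ (n+1) oneB = _
    rw [FK, Function.iterate_succ_apply']
    rfl
  -- measurability / nonnegativity / growth package
  have hpkg : ∀ n, Measurable (FKn n) ∧ (∀ y, 0 ≤ FKn n y) ∧
      ∃ D a : ℝ, 0 ≤ D ∧ 0 ≤ a ∧ ∀ y, FKn n y ≤ D * Real.exp (a * ‖y‖) := by
    intro n
    induction n with
    | zero =>
      refine ⟨?_, honeBnn, 1, 0, zero_le_one, le_refl 0, fun y => ?_⟩
      · rw [hFK0, honeB]
        exact measurable_const.indicator hBm
      · rw [hFK0]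
        simpa using honeBle y
    | succ n ih =>
      obtain ⟨hm, hnn, D, a, hD, ha, hbd⟩ := ih
      have hHm : Measurable (Edom.indicator fun y => G y * FKn n y) :=
        (hGm.mul hm).indicator hEm
      have hHnn : ∀ y, 0 ≤ Edom.indicator (fun y' => G y' * FKn n y') y := hindnn _ hnn
      have hHbd : ∀ y, Edom.indicator (fun y' => G y' * FKn n y') y
          ≤ (C * D) * Real.exp ((1 + a) * ‖y‖) := by
        intro y
        by_cases hy : y ∈ Edom
        · rw [indicator_of_mem hy]
          calc G y * FKn n y ≤ (C * Real.exp ‖y‖) * (D * Real.exp (a * ‖y‖)) :=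
              mul_le_mul (hGgrowth y hy) (hbd y) (hnn y) (by positivity)
            _ = (C * D) * Real.exp ((1 + a) * ‖y‖) := by
              rw [add_mul, one_mul, Real.exp_add]; ring
        · rw [indicator_of_notMem hy]; positivity
      have hdom : ∀ x z, ρ z * Edom.indicator (fun y' => G y' * FKn n y') (F x + z)
          ≤ (C * D) * Real.exp ((1 + a) * ‖F x‖) * (ρ z * Real.exp ((1 + a) * ‖z‖)) := by
        intro x z
        calc ρ z * Edom.indicator (fun y' => G y' * FKn n y') (F x + z)
            ≤ ρ z * ((C * D) * Real.exp ((1 + a) * ‖F x + z‖)) :=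
              mul_le_mul_of_nonneg_left (hHbd _) (hρpos z).le
          _ ≤ ρ z * ((C * D) * (Real.exp ((1 + a) * ‖F x‖) * Real.exp ((1 + a) * ‖z‖))) := by
              refine mul_le_mul_of_nonneg_left
                (mul_le_mul_of_nonneg_left ?_ (by positivity)) (hρpos z).le
              rw [← Real.exp_add]
              refine Real.exp_le_exp.mpr ?_
              have := norm_add_le (F x) z
              nlinarith
          _ = (C * D) * Real.exp ((1 + a) * ‖F x‖) * (ρ z * Real.exp ((1 + a) * ‖z‖)) := by
              ring
      have hint : ∀ x, Integrable
          (fun z => ρ z * Edom.indicator (fun y' => G y' * FKn n y') (F x + z)) := by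
        intro x
        refine Integrable.mono
          ((hρint (1 + a)).const_mul ((C * D) * Real.exp ((1 + a) * ‖F x‖))) ?_
          (ae_of_all _ fun z => ?_)
        · exact (hρc.measurable.mul
            (hHm.comp (measurable_id.const_add (F x)))).aestronglyMeasurable
        · rw [Real.norm_eq_abs, Real.norm_eq_abs,
            abs_of_nonneg (mul_nonneg (hρpos z).le (hHnn _)),
            abs_of_nonneg (mul_nonneg (by positivity)
              (mul_nonneg (hρpos z).le (Real.exp_pos _).le))]
          exact hdom x z
      have hmeas' : Measurable (FKn (n+1)) := by
        rw [hFKsucc]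
        have h1 : Measurable fun w : (EuclideanSpace ℝ (Fin d)) × (EuclideanSpace ℝ (Fin d)) =>
            ρ w.2 * Edom.indicator (fun y' => G y' * FKn n y') (w.1 + w.2) :=
          (hρc.measurable.comp measurable_snd).mul
            (hHm.comp (measurable_fst.add measurable_snd))
        have h2 := h1.stronglyMeasurable.integral_prod_right' (ν := volume)
        have h3 : FKstep Edom F G γ (FKn n)
            = fun x => (fun w => ∫ z, ρ z * Edom.indicator
                (fun y' => G y' * FKn n y') (w + z)) (F x) := by
          funext x
          rw [hstep]
        rw [h3]
        exact h2.measurable.comp hFm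
      set J := ∫ z, ρ z * Real.exp ((1 + a) * ‖z‖) with hJ
      have hJnn : 0 ≤ J :=
        integral_nonneg fun z => mul_nonneg (hρpos z).le (Real.exp_pos _).le
      refine ⟨hmeas', fun y => ?_, C * D * J * Real.exp ((1 + a) * c₀), 1 + a,
        by positivity, by linarith, fun y => ?_⟩
      · rw [hFKsucc]
        exact hFKnn _ hnn y
      · rw [hFKsucc]
        have step1 : ∫ z, ρ z * Edom.indicator (fun y' => G y' * FKn n y') (F y + z)
            ≤ ∫ z, (C * D) * Real.exp ((1 + a) * ‖F y‖) * (ρ z * Real.exp ((1 + a) * ‖z‖)) := by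
          refine integral_mono_of_nonneg
            (ae_of_all _ fun z => mul_nonneg (hρpos z).le (hHnn _))
            ((hρint (1 + a)).const_mul _) (ae_of_all _ fun z => hdom y z)
        have step2 : ∫ z, (C * D) * Real.exp ((1 + a) * ‖F y‖) * (ρ z * Real.exp ((1 + a) * ‖z‖))
            = (C * D) * Real.exp ((1 + a) * ‖F y‖) * J := by rw [integral_const_mul]
        have h2 : Real.exp ((1 + a) * ‖F y‖)
            ≤ Real.exp ((1 + a) * c₀) * Real.exp ((1 + a) * ‖y‖) := by
          rw [← Real.exp_add]
          refine Real.exp_le_exp.mpr ?_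
          have h1 := hFgrow y
          nlinarith
        calc FKstep Edom F G γ (FKn n) y = _ := hstep _ y
          _ ≤ (C * D) * Real.exp ((1 + a) * ‖F y‖) * J := by rw [← step2]; exact step1
          _ = (C * D * J) * Real.exp ((1 + a) * ‖F y‖) := by ring
          _ ≤ (C * D * J) * (Real.exp ((1 + a) * c₀) * Real.exp ((1 + a) * ‖y‖)) :=
              mul_le_mul_of_nonneg_left h2 (by positivity)
          _ = C * D * J * Real.exp ((1 + a) * c₀) * Real.exp ((1 + a) * ‖y‖) := by ring
  have hIntAll : ∀ n x, Integrable
      (fun z => ρ z * Edom.indicator (fun y' => G y' * FKn n y') (F x + z)) := by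
    intro n x
    obtain ⟨hm, hnn, D, a, hD, ha, hbd⟩ := hpkg n
    have hHm : Measurable (Edom.indicator fun y => G y * FKn n y) :=
      (hGm.mul hm).indicator hEm
    have hHnn : ∀ y, 0 ≤ Edom.indicator (fun y' => G y' * FKn n y') y := hindnn _ hnn
    have hHbd : ∀ y, Edom.indicator (fun y' => G y' * FKn n y') y
        ≤ (C * D) * Real.exp ((1 + a) * ‖y‖) := by
      intro y
      by_cases hy : y ∈ Edom
      · rw [indicator_of_mem hy]
        calc G y * FKn n y ≤ (C * Real.exp ‖y‖) * (D * Real.exp (a * ‖y‖)) :=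
            mul_le_mul (hGgrowth y hy) (hbd y) (hnn y) (by positivity)
          _ = (C * D) * Real.exp ((1 + a) * ‖y‖) := by
            rw [add_mul, one_mul, Real.exp_add]; ring
      · rw [indicator_of_notMem hy]; positivity
    refine Integrable.mono
      ((hρint (1 + a)).const_mul ((C * D) * Real.exp ((1 + a) * ‖F x‖))) ?_
      (ae_of_all _ fun z => ?_)
    · exact (hρc.measurable.mul
        (hHm.comp (measurable_id.const_add (F x)))).aestronglyMeasurable
    · rw [Real.norm_eq_abs, Real.norm_eq_abs,
        abs_of_nonneg (mul_nonneg (hρpos z).le (hHnn _)),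
        abs_of_nonneg (mul_nonneg (by positivity)
          (mul_nonneg (hρpos z).le (Real.exp_pos _).le))]
      calc ρ z * Edom.indicator (fun y' => G y' * FKn n y') (F x + z)
          ≤ ρ z * ((C * D) * Real.exp ((1 + a) * ‖F x + z‖)) :=
            mul_le_mul_of_nonneg_left (hHbd _) (hρpos z).le
        _ ≤ ρ z * ((C * D) * (Real.exp ((1 + a) * ‖F x‖) * Real.exp ((1 + a) * ‖z‖))) := by
            refine mul_le_mul_of_nonneg_left
              (mul_le_mul_of_nonneg_left ?_ (by positivity)) (hρpos z).le
            rw [← Real.exp_add]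
            refine Real.exp_le_exp.mpr ?_
            have := norm_add_le (F x) z
            nlinarith
        _ = (C * D) * Real.exp ((1 + a) * ‖F x‖) * (ρ z * Real.exp ((1 + a) * ‖z‖)) := by ring
  -- main induction for the lower bound
  have hlow : ∀ n, ∀ y, θ ^ n * oneB y ≤ FKn n y := by
    intro n
    induction n with
    | zero =>
      intro y
      rw [hFK0, pow_zero, one_mul]
    | succ n ih =>
      intro y
      obtain ⟨hm, hnn, _⟩ := hpkg n
      by_cases hyB : y ∈ B
      · have h1 : oneB y = 1 := indicator_of_mem hyB _
        rw [h1, mul_one, hFKsucc, hstep]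
        have h2 : θ ^ (n+1) ≤ θ ^ n * FKstep Edom F G γ oneB y := by
          rw [pow_succ]
          exact mul_le_mul_of_nonneg_left (hθle y hyB) (pow_nonneg hθpos.le n)
        refine le_trans h2 ?_
        rw [hstep, ← integral_const_mul]
        refine integral_mono_of_nonneg (ae_of_all _ fun z => ?_) (hIntAll n y)
          (ae_of_all _ fun z => ?_)
        · exact mul_nonneg (pow_nonneg hθpos.le n)
            (mul_nonneg (hρpos z).le (hindnn oneB honeBnn _))
        · dsimp only
          by_cases hwE : (F y + z) ∈ Edom
          · rw [indicator_of_mem hwE, indicator_of_mem hwE]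
            calc θ ^ n * (ρ z * (G (F y + z) * oneB (F y + z)))
                = ρ z * (G (F y + z) * (θ ^ n * oneB (F y + z))) := by ring
              _ ≤ ρ z * (G (F y + z) * FKn n (F y + z)) :=
                  mul_le_mul_of_nonneg_left
                    (mul_le_mul_of_nonneg_left (ih (F y + z)) (hGpos _ hwE).le) (hρpos z).le
          · rw [indicator_of_notMem hwE, indicator_of_notMem hwE]
            simp
      · have h1 : oneB y = 0 := indicator_of_notMem hyB _
        rw [h1, mul_zero, hFKsucc]
        exact hFKnn _ hnn y
  refine ⟨hθpos, ?_⟩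
  intro n _ x hx
  have h := hlow n x
  have h1 : oneB x = 1 := indicator_of_mem hx _
  rw [h1, mul_one] at h
  exact h
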